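/- Let μ₂ ≤ μ₁ be nonnegative real numbers with Δ := μ₁ − μ₂ > 0, let n > 0, and let L > 0. If L/n < 3Δ/28 and L/n < Δ²/(128·μ₁), then μ₂ + (14/(3n))·L + 2·√(2·μ₂·L/n) < μ₁ − 2·√(2·μ₁·L/n). -/
import Mathlib


open Real

/-- If `0 ≤ μ₂ ≤ μ₁` with gap `Δ = μ₁ − μ₂ > 0`, `n > 0`, `L > 0`, and
`L/n < 3Δ/28` and `L/n < Δ²/(128·μ₁)`, then the deterministic upper envelope at `μ₂`
falls strictly below the deterministic lower envelope at `μ₁`: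
`μ₂ + (14/(3n))·L + 2·√(2·μ₂·L/n) < μ₁ − 2·√(2·μ₁·L/n)`. -/
theorem envelope_separation (μ₁ μ₂ n L : ℝ) (hμ₂ : 0 ≤ μ₂) (hle : μ₂ ≤ μ₁)
    (hΔ : 0 < μ₁ - μ₂) (hn : 0 < n) (hL : 0 < L)
    (h1 : L / n < 3 * (μ₁ - μ₂) / 28)
    (h2 : L / n < (μ₁ - μ₂) ^ 2 / (128 * μ₁)) :
    μ₂ + (14 / (3 * n)) * L + 2 * Real.sqrt (2 * μ₂ * L / n) <
      μ₁ - 2 * Real.sqrt (2 * μ₁ * L / n) := by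
  have hμ₁ : 0 < μ₁ := by linarith
  set Δ := μ₁ - μ₂ with hΔdef
  have hr : 0 < L / n := div_pos hL hn
  -- √(2μ₁ L/n) < Δ/8
  have hsq : 2 * μ₁ * L / n < (Δ / 8) ^ 2 := by
    have := (mul_lt_mul_of_pos_left h2 (by positivity : (0:ℝ) < 2 * μ₁))
    calc 2 * μ₁ * L / n = 2 * μ₁ * (L / n) := by ring
      _ < 2 * μ₁ * (Δ ^ 2 / (128 * μ₁)) := this
      _ = (Δ / 8) ^ 2 := by field_simp; ring
  have h1' : Real.sqrt (2 * μ₁ * L / n) < Δ / 8 := by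
    have h8 : 0 < Δ / 8 := by linarith
    have := Real.sqrt_lt_sqrt (by positivity) hsq
    rwa [Real.sqrt_sq h8.le] at this
  have h2' : Real.sqrt (2 * μ₂ * L / n) ≤ Real.sqrt (2 * μ₁ * L / n) := by
    apply Real.sqrt_le_sqrt
    have : 2 * μ₂ * (L / n) ≤ 2 * μ₁ * (L / n) := by nlinarith
    calc 2 * μ₂ * L / n = 2 * μ₂ * (L / n) := by ring
      _ ≤ 2 * μ₁ * (L / n) := this
      _ = 2 * μ₁ * L / n := by ring
  have h14 : (14 / (3 * n)) * L < Δ / 2 := by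
    have : (14 : ℝ) / 3 * (L / n) < 14 / 3 * (3 * Δ / 28) :=
      mul_lt_mul_of_pos_left h1 (by norm_num)
    calc (14 / (3 * n)) * L = 14 / 3 * (L / n) := by field_simp
      _ < 14 / 3 * (3 * Δ / 28) := this
      _ = Δ / 2 := by ring
  linarith
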